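/- The functions Φ₁ and Φ₂ are real-analytic on the open set {(a,b) ∈ ℝ² : a > b and ab > 1}. -/

import Mathlib

open Real Filter

/-- Complete elliptic integral of the first kind, `K(m)`. -/
noncomputable def ellK (m : ℝ) : ℝ :=
  ∫ t in (0:ℝ)..(π/2), 1 / Real.sqrt (1 - m * Real.sin t ^ 2)

/-- Complete elliptic integral of the second kind, `E(m)`. -/
noncomputable def ellE (m : ℝ) : ℝ :=
  ∫ t in (0:ℝ)..(π/2), Real.sqrt (1 - m * Real.sin t ^ 2)

/-- Complete elliptic integral of the third kind, `Π(n, m)`. -/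
noncomputable def ellPi (n m : ℝ) : ℝ :=
  ∫ t in (0:ℝ)..(π/2), 1 / ((1 - n * Real.sin t ^ 2) * Real.sqrt (1 - m * Real.sin t ^ 2))

/-- The constant `μ(a,b)`. -/
noncomputable def muC (a b : ℝ) : ℝ :=
  Real.sqrt ((a + b + Real.sqrt (4 + (a - b) ^ 2)) / 2)

/-- The constant `ν(a,b)`. -/
noncomputable def nuC (a b : ℝ) : ℝ :=
  Real.sqrt ((a + b - Real.sqrt (4 + (a - b) ^ 2)) / 2)

/-- First component `Φ₁` of the period map. -/
noncomputable def Phi1 (a b : ℝ) : ℝ :=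
  muC a b * ellPi ((a - b) / (a - muC a b ^ 2)) ((a - b) / a) /
    (π * Real.sqrt a * (a - muC a b ^ 2))

/-- Second component `Φ₂` of the period map. -/
noncomputable def Phi2 (a b : ℝ) : ℝ :=
  nuC a b * ellPi ((a - b) / (a - nuC a b ^ 2)) ((a - b) / a) /
    (π * Real.sqrt a * (a - nuC a b ^ 2))

/-- The parameter domain `Σ = {(a,b) : a > b, ab > 1}`. -/
def SigmaSet : Set (ℝ × ℝ) := {p | p.1 > p.2 ∧ p.1 * p.2 > 1}

/-- The domain `Ω̃ = {(x,y) : -1/√2 < x < -1/2, x² + y² < 1/2, y > 0}`. -/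
def OmegaSet : Set (ℝ × ℝ) :=
  {p | -(1 / Real.sqrt 2) < p.1 ∧ p.1 < -(1/2) ∧ p.1 ^ 2 + p.2 ^ 2 < 1/2 ∧ p.2 > 0}

section AuxEllPi
open MeasureTheory Finset


private lemma isOpen_posre (u : ℝ) : IsOpen {w : ℂ | 0 < (1 - w * u).re} :=
  isOpen_lt continuous_const (Complex.continuous_re.comp (by continuity))

private lemma deriv_inner (u : ℝ) (w : ℂ) : HasDerivAt (fun w : ℂ => 1 - w * u) (-u) w := by
  simpa using ((hasDerivAt_id w).mul_const (u:ℂ)).const_sub 1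

private lemma iter_cpow (u : ℝ) (k : ℕ) : ∀ w : ℂ, 0 < (1 - w * u).re →
    iteratedDeriv k (fun w : ℂ => (1 - w * u) ^ (-(1/2) : ℂ)) w
      = (∏ i ∈ range k, ((i:ℂ) + 1/2)) * u ^ k * (1 - w * u) ^ (-(1/2) - k : ℂ) := by
  induction k with
  | zero => intro w hw; simp
  | succ k ih =>
    intro w hw
    have hev : iteratedDeriv k (fun w : ℂ => (1 - w * u) ^ (-(1/2) : ℂ))
        =ᶠ[nhds w] fun w => (∏ i ∈ range k, ((i:ℂ) + 1/2)) * u ^ k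
          * (1 - w * u) ^ (-(1/2) - k : ℂ) := by
      filter_upwards [(isOpen_posre u).mem_nhds hw] with w' hw' using ih w' hw'
    rw [iteratedDeriv_succ, hev.deriv_eq]
    have hd : HasDerivAt (fun w : ℂ => (1 - w * u) ^ (-(1/2) - k : ℂ))
        ((-(1/2) - k) * (1 - w * u) ^ (-(1/2) - k - 1 : ℂ) * (-u)) w :=
      (deriv_inner u w).cpow_const (Or.inl hw)
    rw [((hd.const_mul ((∏ i ∈ range k, ((i:ℂ) + 1/2)) * u ^ k)).deriv)]
    rw [prod_range_succ]
    have he : (-(1/2) - k - 1 : ℂ) = (-(1/2) - (k+1 : ℕ) : ℂ) := by push_cast; ring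
    rw [he]
    push_cast
    ring

private lemma bHasSum {m₀ ε u w : ℝ} (hε : 0 < ε) (hu0 : 0 ≤ u) (hu1 : u ≤ 1)
    (hB : 2*ε ≤ 1 - m₀ * u) (hw : |w| < 2*ε) :
    HasSum (fun k : ℕ => ((∏ i ∈ range k, ((i:ℝ) + 1/2)) / k.factorial) * u ^ k
        * (1 - m₀*u) ^ (-(1/2) - k : ℝ) * w ^ k)
      (1 / Real.sqrt (1 - (m₀ + w) * u)) := by
  have hBpos : 0 < 1 - m₀ * u := lt_of_lt_of_le (by linarith) hB
  have hXpos : 0 < 1 - (m₀ + w) * u := by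
    have h1 : |w * u| ≤ |w| := by rw [abs_mul]; nlinarith [abs_nonneg w, abs_of_nonneg hu0]
    have h2 := le_abs_self (w * u)
    have h3 := neg_abs_le (w * u)
    nlinarith
  have hdiff : DifferentiableOn ℂ (fun w : ℂ => (1 - w * u) ^ (-(1/2) : ℂ))
      (Metric.ball (m₀:ℂ) (2*ε)) := by
    intro w' hw'
    have hre : 0 < (1 - w' * u).re := by
      have h1 : (1 - w' * u).re = 1 - w'.re * u := by
        simp [Complex.sub_re, Complex.mul_re]
      have h2 : |w'.re - m₀| < 2*ε := by
        have := Complex.abs_re_le_norm (w' - m₀)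
        have hd : ‖w' - m₀‖ < 2*ε := by
          simpa [Complex.dist_eq] using (Metric.mem_ball.mp hw')
        simpa using lt_of_le_of_lt this hd
      have h3 : (w'.re - m₀) * u ≤ |w'.re - m₀| := by
        calc (w'.re - m₀) * u ≤ |(w'.re - m₀) * u| := le_abs_self _
          _ = |w'.re - m₀| * u := by rw [abs_mul, abs_of_nonneg hu0]
          _ ≤ |w'.re - m₀| * 1 := by gcongr
          _ = _ := mul_one _
      rw [h1]
      nlinarith
    exact (((deriv_inner u w').cpow_const (Or.inl hre)).differentiableAt).differentiableWithinAt
  have hz : ((m₀:ℂ) + w) ∈ Metric.ball (m₀:ℂ) (2*ε) := by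
    rw [Metric.mem_ball, Complex.dist_eq]
    simpa using hw
  have H := Complex.hasSum_taylorSeries_on_ball hdiff hz
  rw [← Complex.hasSum_ofReal]
  have hm₀re : 0 < ((1:ℂ) - (m₀:ℂ) * u).re := by
    have : ((1:ℂ) - (m₀:ℂ) * u) = ((1 - m₀*u : ℝ) : ℂ) := by push_cast; ring
    rw [this, Complex.ofReal_re]; exact hBpos
  convert H using 1
  · rfl
  · funext k
    rw [iter_cpow u k _ hm₀re]
    have hcast : ((1:ℂ) - (m₀:ℂ) * u) = ((1 - m₀*u : ℝ) : ℂ) := by push_cast; ring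
    have hexp : (-(1/2) - (k:ℂ)) = ((-(1/2) - (k:ℝ) : ℝ) : ℂ) := by push_cast; ring
    rw [hcast, hexp, ← Complex.ofReal_cpow hBpos.le (-(1/2) - (k:ℝ) : ℝ)]
    push_cast
    rw [smul_eq_mul, smul_eq_mul]
    ring
  · have hcast : ((1:ℂ) - ((m₀:ℂ) + w) * u) = ((1 - (m₀ + w)*u : ℝ) : ℂ) := by push_cast; ring
    have hexp : (-(1/2) : ℂ) = ((-(1/2) : ℝ) : ℂ) := by norm_num
    rw [hcast, hexp, ← Complex.ofReal_cpow hXpos.le (-(1/2) : ℝ)]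
    congr 1
    rw [one_div, Real.sqrt_eq_rpow, ← Real.rpow_neg hXpos.le]

private lemma aHasSum {n₀ ε u w : ℝ} (hε : 0 < ε) (hu0 : 0 ≤ u) (hu1 : u ≤ 1)
    (hA : 2*ε ≤ 1 - n₀ * u) (hw : |w| < 2*ε) :
    HasSum (fun j : ℕ => (1 - n₀*u)⁻¹ * (u * (1 - n₀*u)⁻¹) ^ j * w ^ j)
      (1 / (1 - (n₀ + w) * u)) := by
  have hApos : 0 < 1 - n₀ * u := lt_of_lt_of_le (by linarith) hA
  have hr : ‖w * (u * (1 - n₀*u)⁻¹)‖ < 1 := by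
    rw [Real.norm_eq_abs, abs_mul, abs_mul, abs_of_nonneg hu0,
      abs_of_nonneg (inv_nonneg.mpr hApos.le)]
    have h1 : |w| * (u * (1 - n₀*u)⁻¹) ≤ |w| * (1 - n₀*u)⁻¹ := by
      gcongr
      nlinarith [inv_nonneg.mpr hApos.le]
    have h2 : |w| * (1 - n₀*u)⁻¹ < 1 := by
      rw [mul_inv_lt_iff₀ hApos, one_mul]
      linarith
    linarith
  have H := (hasSum_geometric_of_norm_lt_one hr).mul_left (1 - n₀*u)⁻¹
  have hXpos : 0 < 1 - (n₀ + w) * u := by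
    have h1 : |w * u| ≤ |w| := by rw [abs_mul]; nlinarith [abs_nonneg w, abs_of_nonneg hu0]
    have h2 := le_abs_self (w * u)
    have h3 := neg_abs_le (w * u)
    nlinarith
  convert H using 1
  · rfl
  · funext j
    rw [mul_pow]
    ring
  · have hA0 : (1 - n₀*u) ≠ 0 := hApos.ne'
    have h1 : (1:ℝ) - w * (u * (1 - n₀*u)⁻¹) = (1 - (n₀+w)*u) * (1 - n₀*u)⁻¹ := by
      have : (1 - (n₀+w)*u) = (1 - n₀*u) - w*u := by ring
      rw [this, sub_mul, mul_inv_cancel₀ hA0]; ring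
    rw [h1, mul_inv, inv_inv, one_div]
    field_simp

private lemma analyticAt_sqrt {x : ℝ} (hx : 0 < x) : AnalyticAt ℝ Real.sqrt x := by
  have h1 : AnalyticAt ℂ (fun z : ℂ => z ^ (1/2 : ℂ)) (x:ℂ) := by
    refine DifferentiableOn.analyticOnNhd (fun z hz => ?_) Complex.isOpen_slitPlane (x:ℂ) ?_
    · exact (((hasDerivAt_id z).cpow_const hz).differentiableAt).differentiableWithinAt
    · rw [Complex.mem_slitPlane_iff]
      left
      simpa using hx
  have h3 : AnalyticAt ℝ (fun t : ℝ => (t:ℂ)) x := Complex.ofRealCLM.analyticAt x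
  have h4 : AnalyticAt ℝ (fun t : ℝ => ((t:ℂ) ^ (1/2:ℂ))) x := h1.restrictScalars.comp h3
  have h5 : AnalyticAt ℝ (fun t : ℝ => ((t:ℂ) ^ (1/2:ℂ)).re) x :=
    (Complex.reCLM.analyticAt _).comp h4
  apply h5.congr
  filter_upwards [eventually_gt_nhds hx] with t ht
  have hc : ((1:ℂ)/2) = ((1/2 : ℝ) : ℂ) := by norm_num
  rw [hc, ← Complex.ofReal_cpow ht.le, Complex.ofReal_re, Real.sqrt_eq_rpow]

private lemma ellPi_analyticAt {n₀ m₀ : ℝ} (hn : n₀ < 1) (hm : m₀ < 1) :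
    AnalyticAt ℝ (fun q : ℝ × ℝ => ellPi q.1 q.2) (n₀, m₀) := by
  obtain ⟨ε, hε, hε4, hεn, hεm⟩ : ∃ ε : ℝ, 0 < ε ∧ ε ≤ 1/4 ∧ 2*ε ≤ 1 - n₀ ∧ 2*ε ≤ 1 - m₀ := by
    refine ⟨min (1/4) (min ((1-n₀)/2) ((1-m₀)/2)),
      lt_min (by norm_num) (lt_min (by linarith) (by linarith)), min_le_left _ _, ?_, ?_⟩
    · have := (min_le_right (1/4:ℝ) _).trans (min_le_left ((1-n₀)/2) ((1-m₀)/2))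
      linarith
    · have := (min_le_right (1/4:ℝ) _).trans (min_le_right ((1-n₀)/2) ((1-m₀)/2))
      linarith
  have h2ε : 0 < 2*ε := by linarith
  have hunited : ∀ (x₀ : ℝ), 2*ε ≤ 1 - x₀ → ∀ t : ℝ, 2*ε ≤ 1 - x₀ * Real.sin t ^ 2 := by
    intro x₀ hεx t
    have h1 : Real.sin t ^ 2 ≤ 1 := Real.sin_sq_le_one t
    have h2 : 0 ≤ Real.sin t ^ 2 := sq_nonneg _
    rcases le_or_gt 0 x₀ with h | h
    · nlinarith
    · nlinarith
  have hAt := hunited n₀ hεn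
  have hBt := hunited m₀ hεm
  have hApos : ∀ t, 0 < 1 - n₀ * Real.sin t ^ 2 := fun t => lt_of_lt_of_le h2ε (hAt t)
  have hBpos : ∀ t, 0 < 1 - m₀ * Real.sin t ^ 2 := fun t => lt_of_lt_of_le h2ε (hBt t)
  set μ₀ : Measure ℝ := volume.restrict (Set.Ioc (0:ℝ) (π/2)) with hμ₀
  have hμuniv : (μ₀ Set.univ).toReal = π/2 := by
    rw [hμ₀, Measure.restrict_apply_univ, Real.volume_Ioc, sub_zero,
      ENNReal.toReal_ofReal (by positivity)]
  haveI : IsFiniteMeasure μ₀ := by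
    constructor
    rw [hμ₀, Measure.restrict_apply_univ, Real.volume_Ioc]
    exact ENNReal.ofReal_lt_top
  set a : ℕ → ℝ → ℝ := fun j t =>
    (1 - n₀ * Real.sin t ^ 2)⁻¹ * (Real.sin t ^ 2 * (1 - n₀ * Real.sin t ^ 2)⁻¹) ^ j with ha
  set b : ℕ → ℝ → ℝ := fun k t =>
    ((∏ i ∈ range k, ((i:ℝ) + 1/2)) / k.factorial) * (Real.sin t ^ 2) ^ k
      * (1 - m₀ * Real.sin t ^ 2) ^ (-(1/2) - k : ℝ) with hb
  have hacont : ∀ j, Continuous (a j) := by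
    intro j
    have hc : Continuous fun t : ℝ => (1 - n₀ * Real.sin t ^ 2)⁻¹ :=
      (continuous_const.sub (continuous_const.mul (Real.continuous_sin.pow 2))).inv₀
        fun t => (hApos t).ne'
    exact hc.mul (((Real.continuous_sin.pow 2).mul hc).pow j)
  have hbcont : ∀ k, Continuous (b k) := by
    intro k
    have hc : Continuous fun t : ℝ => (1 - m₀ * Real.sin t ^ 2) ^ (-(1/2) - k : ℝ) :=
      (continuous_const.sub (continuous_const.mul (Real.continuous_sin.pow 2))).rpow_const
        fun t => Or.inl (hBpos t).ne'
    exact (continuous_const.mul ((Real.continuous_sin.pow 2).pow k)).mul hc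
  have ha_bd : ∀ j t, |a j t| ≤ (2*ε)⁻¹ * ((2*ε)⁻¹)^j := by
    intro j t
    have hA := hAt t
    have hAp := hApos t
    have hinv : (1 - n₀ * Real.sin t ^ 2)⁻¹ ≤ (2*ε)⁻¹ := by
      apply inv_anti₀ h2ε hA
    have hu1 : Real.sin t ^ 2 ≤ 1 := Real.sin_sq_le_one t
    have hu0 : (0:ℝ) ≤ Real.sin t ^ 2 := sq_nonneg _
    rw [ha, abs_mul, abs_pow]
    have h1 : |(1 - n₀ * Real.sin t ^ 2)⁻¹| = (1 - n₀ * Real.sin t ^ 2)⁻¹ :=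
      abs_of_nonneg (by positivity)
    have h2 : |Real.sin t ^ 2 * (1 - n₀ * Real.sin t ^ 2)⁻¹| ≤ (2*ε)⁻¹ := by
      rw [abs_mul, abs_of_nonneg hu0, abs_of_nonneg (by positivity : (0:ℝ) ≤ (1 - n₀ * Real.sin t ^ 2)⁻¹)]
      nlinarith [inv_nonneg.mpr hAp.le]
    rw [h1]
    exact mul_le_mul hinv (pow_le_pow_left₀ (abs_nonneg _) h2 j) (by positivity) (by positivity)
  have hb_bd : ∀ k t, |b k t| ≤ (2*ε) ^ (-(1/2):ℝ) * ((2*ε)⁻¹)^k := by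
    intro k t
    have hB := hBt t
    have hBp := hBpos t
    have hu1 : Real.sin t ^ 2 ≤ 1 := Real.sin_sq_le_one t
    have hu0 : (0:ℝ) ≤ Real.sin t ^ 2 := sq_nonneg _
    have hcfac : (∏ i ∈ range k, ((i:ℝ) + 1/2)) ≤ k.factorial := by
      calc (∏ i ∈ range k, ((i:ℝ) + 1/2)) ≤ ∏ i ∈ range k, ((i:ℝ) + 1) :=
            Finset.prod_le_prod (fun i _ => by positivity) (fun i _ => by linarith)
        _ = k.factorial := by exact_mod_cast Finset.prod_range_add_one_eq_factorial k
    have hfacpos : (0:ℝ) < k.factorial := by exact_mod_cast k.factorial_pos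
    have hcoef1 : (∏ i ∈ range k, ((i:ℝ) + 1/2)) / k.factorial ≤ 1 := by
      rw [div_le_one hfacpos]; exact hcfac
    have hcoef0 : 0 ≤ (∏ i ∈ range k, ((i:ℝ) + 1/2)) / k.factorial := by positivity
    have hek : (-(1/2) - k : ℝ) ≤ 0 := by
      have : (0:ℝ) ≤ k := Nat.cast_nonneg k
      linarith
    have hrpow : (1 - m₀ * Real.sin t ^ 2) ^ (-(1/2) - k : ℝ) ≤ (2*ε) ^ (-(1/2) - k : ℝ) :=
      Real.rpow_le_rpow_of_nonpos h2ε hB hek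
    have hsplit : (2*ε) ^ (-(1/2) - k : ℝ) = (2*ε) ^ (-(1/2):ℝ) * ((2*ε)⁻¹)^k := by
      rw [Real.rpow_sub h2ε, Real.rpow_natCast, div_eq_mul_inv, inv_pow]
    have hbnn : 0 ≤ b k t := by
      rw [hb]
      positivity
    rw [abs_of_nonneg hbnn, hb]
    calc ((∏ i ∈ range k, ((i:ℝ) + 1/2)) / k.factorial) * (Real.sin t ^ 2) ^ k
          * (1 - m₀ * Real.sin t ^ 2) ^ (-(1/2) - k : ℝ)
        ≤ 1 * 1 * ((2*ε) ^ (-(1/2) - k : ℝ)) := by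
          apply mul_le_mul
          · apply mul_le_mul hcoef1 (pow_le_one₀ hu0 hu1) (by positivity) (by norm_num)
          · exact hrpow
          · positivity
          · norm_num
      _ = (2*ε) ^ (-(1/2):ℝ) * ((2*ε)⁻¹)^k := by rw [one_mul, one_mul, hsplit]
  have hintab : ∀ j k : ℕ, Integrable (fun t => a j t * b k t) μ₀ := fun j k =>
    ((hacont j).mul (hbcont k)).integrableOn_Ioc
  set c : ℕ × ℕ → ℝ := fun jk => ∫ t, a jk.1 t * b jk.2 t ∂μ₀ with hcdef
  set C0 : ℝ := (2*ε)⁻¹ * (2*ε) ^ (-(1/2):ℝ) with hC0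
  have hC0pos : 0 < C0 := by rw [hC0]; positivity
  have hc_bd : ∀ j k : ℕ, |c (j, k)| ≤ (π/2) * (C0 * ((2*ε)⁻¹)^(j+k)) := by
    intro j k
    have h := norm_integral_le_of_norm_le_const (μ := μ₀)
      (f := fun t => a j t * b k t) (C := C0 * ((2*ε)⁻¹)^(j+k))
      (ae_of_all _ fun t => ?_)
    · rw [Real.norm_eq_abs] at h
      calc |c (j,k)| ≤ (C0 * ((2*ε)⁻¹)^(j+k)) * (μ₀ Set.univ).toReal := h
        _ = (π/2) * (C0 * ((2*ε)⁻¹)^(j+k)) := by rw [hμuniv]; ring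
    · rw [Real.norm_eq_abs, abs_mul]
      calc |a j t| * |b k t| ≤ ((2*ε)⁻¹ * ((2*ε)⁻¹)^j) * ((2*ε) ^ (-(1/2):ℝ) * ((2*ε)⁻¹)^k) :=
            mul_le_mul (ha_bd j t) (hb_bd k t) (abs_nonneg _) (by positivity)
        _ = C0 * ((2*ε)⁻¹)^(j+k) := by rw [hC0, pow_add]; ring
  set q : FormalMultilinearSeries ℝ (ℝ × ℝ) ℝ := fun N =>
    ∑ jk ∈ Finset.HasAntidiagonal.antidiagonal N, c jk •
      (ContinuousMultilinearMap.mkPiAlgebra ℝ (Fin N) ℝ).compContinuousLinearMap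
        (fun i => if (i:ℕ) < jk.1 then ContinuousLinearMap.fst ℝ ℝ ℝ
          else ContinuousLinearMap.snd ℝ ℝ ℝ) with hqdef
  have hM_norm : ∀ (N j : ℕ),
      ‖(ContinuousMultilinearMap.mkPiAlgebra ℝ (Fin N) ℝ).compContinuousLinearMap
        (fun i : Fin N => if (i:ℕ) < j then ContinuousLinearMap.fst ℝ ℝ ℝ
          else ContinuousLinearMap.snd ℝ ℝ ℝ)‖ ≤ 1 := by
    intro N j
    refine (ContinuousMultilinearMap.norm_compContinuousLinearMap_le _ _).trans ?_
    have h1 : ‖ContinuousMultilinearMap.mkPiAlgebra ℝ (Fin N) ℝ‖ ≤ 1 := by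
      rcases isEmpty_or_nonempty (Fin N) with h | h
      · rw [ContinuousMultilinearMap.norm_mkPiAlgebra_of_empty]; simp
      · exact ContinuousMultilinearMap.norm_mkPiAlgebra_le
    have h2 : (∏ i : Fin N, ‖if (i:ℕ) < j then ContinuousLinearMap.fst ℝ ℝ ℝ
        else ContinuousLinearMap.snd ℝ ℝ ℝ‖) ≤ 1 := by
      refine Finset.prod_le_one (fun i _ => norm_nonneg _) (fun i _ => ?_)
      split
      · exact ContinuousLinearMap.norm_fst_le ℝ ℝ ℝ
      · exact ContinuousLinearMap.norm_snd_le ℝ ℝ ℝ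
    calc ‖ContinuousMultilinearMap.mkPiAlgebra ℝ (Fin N) ℝ‖ *
          ∏ i : Fin N, ‖if (i:ℕ) < j then ContinuousLinearMap.fst ℝ ℝ ℝ
            else ContinuousLinearMap.snd ℝ ℝ ℝ‖ ≤ 1 * 1 :=
        mul_le_mul h1 h2 (Finset.prod_nonneg fun i _ => norm_nonneg _) (by norm_num)
      _ = 1 := by norm_num
  have hM_apply : ∀ (N j : ℕ), j ≤ N → ∀ y : ℝ × ℝ,
      ((ContinuousMultilinearMap.mkPiAlgebra ℝ (Fin N) ℝ).compContinuousLinearMap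
        (fun i : Fin N => if (i:ℕ) < j then ContinuousLinearMap.fst ℝ ℝ ℝ
          else ContinuousLinearMap.snd ℝ ℝ ℝ)) (fun _ => y) = y.1 ^ j * y.2 ^ (N - j) := by
    intro N j hj y
    rw [ContinuousMultilinearMap.compContinuousLinearMap_apply,
      ContinuousMultilinearMap.mkPiAlgebra_apply]
    have hite : ∀ i : Fin N, (if (i:ℕ) < j then ContinuousLinearMap.fst ℝ ℝ ℝ
        else ContinuousLinearMap.snd ℝ ℝ ℝ) y = if (i:ℕ) < j then y.1 else y.2 := by
      intro i; split <;> rfl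
    simp_rw [hite]
    rw [Fin.prod_univ_eq_prod_range (fun i => if i < j then y.1 else y.2) N]
    rw [← Finset.prod_filter_mul_prod_filter_not (Finset.range N) (fun i => i < j)]
    have h1 : (Finset.range N).filter (fun i => i < j) = Finset.range j := by
      ext x; simp only [Finset.mem_filter, Finset.mem_range]; omega
    have h2 : (Finset.range N).filter (fun i => ¬ i < j) = Finset.Ico j N := by
      ext x; simp only [Finset.mem_filter, Finset.mem_range, Finset.mem_Ico]; omega
    rw [h1, h2]
    have h3 : (∏ x ∈ Finset.range j, if x < j then y.1 else y.2) = y.1 ^ j := by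
      rw [Finset.prod_congr rfl (fun x hx => if_pos (Finset.mem_range.mp hx)),
        Finset.prod_const, Finset.card_range]
    have h4 : (∏ x ∈ Finset.Ico j N, if x < j then y.1 else y.2) = y.2 ^ (N - j) := by
      rw [Finset.prod_congr rfl (fun x hx => if_neg (by
        have := (Finset.mem_Ico.mp hx).1; omega)), Finset.prod_const, Nat.card_Ico]
    rw [h3, h4]
  have hq_norm : ∀ N : ℕ, ‖q N‖ ≤ ((π/2) * C0) * (N+1) * ((2*ε)⁻¹)^N := by
    intro N
    rw [hqdef]
    refine (norm_sum_le _ _).trans ?_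
    have hterm : ∀ jk ∈ Finset.HasAntidiagonal.antidiagonal N, ‖c jk •
        (ContinuousMultilinearMap.mkPiAlgebra ℝ (Fin N) ℝ).compContinuousLinearMap
          (fun i : Fin N => if (i:ℕ) < jk.1 then ContinuousLinearMap.fst ℝ ℝ ℝ
            else ContinuousLinearMap.snd ℝ ℝ ℝ)‖ ≤ ((π/2) * C0) * ((2*ε)⁻¹)^N := by
      intro jk hjk
      have hjk' : jk.1 + jk.2 = N := Finset.HasAntidiagonal.mem_antidiagonal.mp hjk
      refine (norm_smul_le (c jk)
        ((ContinuousMultilinearMap.mkPiAlgebra ℝ (Fin N) ℝ).compContinuousLinearMap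
          (fun i : Fin N => if (i:ℕ) < jk.1 then ContinuousLinearMap.fst ℝ ℝ ℝ
            else ContinuousLinearMap.snd ℝ ℝ ℝ))).trans ?_
      have h5 := mul_le_mul (show ‖c jk‖ ≤ π / 2 * (C0 * (2 * ε)⁻¹ ^ (jk.1 + jk.2)) from by
          rw [Real.norm_eq_abs]; exact hc_bd jk.1 jk.2) (hM_norm N jk.1) (norm_nonneg _)
          (by positivity)
      rw [mul_one] at h5
      refine h5.trans (le_of_eq ?_)
      rw [hjk']; ring
    calc (∑ jk ∈ Finset.HasAntidiagonal.antidiagonal N, ‖c jk •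
          (ContinuousMultilinearMap.mkPiAlgebra ℝ (Fin N) ℝ).compContinuousLinearMap
            (fun i : Fin N => if (i:ℕ) < jk.1 then ContinuousLinearMap.fst ℝ ℝ ℝ
              else ContinuousLinearMap.snd ℝ ℝ ℝ)‖)
        ≤ ∑ _jk ∈ Finset.HasAntidiagonal.antidiagonal N, ((π/2) * C0) * ((2*ε)⁻¹)^N :=
          Finset.sum_le_sum hterm
      _ = ((π/2) * C0) * (N+1) * ((2*ε)⁻¹)^N := by
          rw [Finset.sum_const, Finset.Nat.card_antidiagonal, nsmul_eq_mul]
          push_cast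
          ring
  set εn : NNReal := ⟨ε, hε.le⟩ with hεn'
  have hradius : (εn : ENNReal) ≤ q.radius := by
    apply q.le_radius_of_bound (((π/2) * C0) * 2)
    intro N
    have h1 := hq_norm N
    have h2 : ((2*ε)⁻¹)^N * (ε:ℝ)^N = (1/2)^N := by
      rw [← mul_pow]
      congr 1
      field_simp
    have h3 : ((N:ℝ)+1) * (1/2)^N ≤ 2 := by
      have hN : ((N:ℝ)+1) ≤ 2^N := by
        have : N < 2 ^ N := Nat.lt_two_pow_self
        exact_mod_cast this
      have h4 : ((N:ℝ)+1) * (1/2)^N ≤ 2^N * (1/2)^N :=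
        mul_le_mul_of_nonneg_right hN (by positivity)
      have h5 : (2:ℝ)^N * (1/2)^N = 1 := by
        rw [← mul_pow]; norm_num
      linarith
    calc ‖q N‖ * ((εn : NNReal) : ℝ)^N
        ≤ (((π/2) * C0) * (N+1) * ((2*ε)⁻¹)^N) * ε^N :=
          mul_le_mul_of_nonneg_right h1 (by positivity)
      _ = ((π/2) * C0) * (((N:ℝ)+1) * (((2*ε)⁻¹)^N * ε^N)) := by ring
      _ = ((π/2) * C0) * (((N:ℝ)+1) * (1/2)^N) := by rw [h2]
      _ ≤ ((π/2) * C0) * 2 :=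
          mul_le_mul_of_nonneg_left h3 (by positivity)
  have hball : HasFPowerSeriesOnBall (fun p : ℝ × ℝ => ellPi p.1 p.2) q (n₀, m₀)
      (εn : ENNReal) := by
    refine ⟨hradius, ENNReal.coe_pos.mpr (NNReal.coe_pos.mp hε), ?_⟩
    intro y hy
    have hy' : ‖y‖ < ε := by
      rw [mem_emetric_ball_zero_iff, hεn'] at hy
      exact NNReal.coe_lt_coe.mpr (ENNReal.coe_lt_coe.mp hy)
    have hy1 : |y.1| < 2*ε := by
      have := norm_fst_le y
      rw [← Real.norm_eq_abs]
      linarith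
    have hy2 : |y.2| < 2*ε := by
      have := norm_snd_le y
      rw [← Real.norm_eq_abs]
      linarith
    set θ : ℝ := ‖y‖ / (2*ε) with hθdef
    have hθ0 : 0 ≤ θ := by positivity
    have hθ1 : θ < 1 := by
      rw [hθdef, div_lt_one h2ε]
      linarith
    set F : ℕ → ℝ → ℝ := fun N t => ∑ jk ∈ Finset.HasAntidiagonal.antidiagonal N,
      (a jk.1 t * y.1 ^ jk.1) * (b jk.2 t * y.2 ^ jk.2) with hF
    have hint2 : ∀ (j k : ℕ) (c1 c2 : ℝ),
        Integrable (fun t => (a j t * c1) * (b k t * c2)) μ₀ := fun j k c1 c2 =>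
      (((hacont j).mul continuous_const).mul
        ((hbcont k).mul continuous_const)).integrableOn_Ioc
    have hFint : ∀ N, Integrable (F N) μ₀ := by
      intro N
      rw [hF]
      exact integrable_finset_sum _ (fun jk _ => hint2 jk.1 jk.2 _ _)
    have hy1n : |y.1| ≤ ‖y‖ := by rw [← Real.norm_eq_abs]; exact norm_fst_le y
    have hy2n : |y.2| ≤ ‖y‖ := by rw [← Real.norm_eq_abs]; exact norm_snd_le y
    have hFbd : ∀ N t, |F N t| ≤ (C0 * ((N:ℝ)+1)) * θ^N := by
      intro N t
      refine (Finset.abs_sum_le_sum_abs _ _).trans ?_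
      have hterm : ∀ jk ∈ Finset.HasAntidiagonal.antidiagonal N,
          |(a jk.1 t * y.1 ^ jk.1) * (b jk.2 t * y.2 ^ jk.2)| ≤ C0 * θ^N := by
        intro jk hjk
        have hjk' : jk.1 + jk.2 = N := Finset.HasAntidiagonal.mem_antidiagonal.mp hjk
        rw [abs_mul (a jk.1 t * y.1 ^ jk.1) (b jk.2 t * y.2 ^ jk.2),
          abs_mul (a jk.1 t) (y.1 ^ jk.1), abs_mul (b jk.2 t) (y.2 ^ jk.2), abs_pow, abs_pow]
        have e1 : |a jk.1 t| * |y.1|^jk.1 ≤ (2*ε)⁻¹ * θ^jk.1 := by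
          calc |a jk.1 t| * |y.1|^jk.1 ≤ ((2*ε)⁻¹ * ((2*ε)⁻¹)^jk.1) * ‖y‖^jk.1 :=
                mul_le_mul (ha_bd jk.1 t) (pow_le_pow_left₀ (abs_nonneg _) hy1n _)
                  (by positivity) (by positivity)
            _ = (2*ε)⁻¹ * θ^jk.1 := by rw [hθdef, div_pow, inv_pow]; ring
        have e2 : |b jk.2 t| * |y.2|^jk.2 ≤ (2*ε) ^ (-(1/2):ℝ) * θ^jk.2 := by
          calc |b jk.2 t| * |y.2|^jk.2 ≤ ((2*ε) ^ (-(1/2):ℝ) * ((2*ε)⁻¹)^jk.2) * ‖y‖^jk.2 :=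
                mul_le_mul (hb_bd jk.2 t) (pow_le_pow_left₀ (abs_nonneg _) hy2n _)
                  (by positivity) (by positivity)
            _ = (2*ε) ^ (-(1/2):ℝ) * θ^jk.2 := by rw [hθdef, div_pow, inv_pow]; ring
        calc |a jk.1 t| * |y.1|^jk.1 * (|b jk.2 t| * |y.2|^jk.2)
            ≤ ((2*ε)⁻¹ * θ^jk.1) * ((2*ε) ^ (-(1/2):ℝ) * θ^jk.2) :=
              mul_le_mul e1 e2 (by positivity) (by positivity)
          _ = C0 * θ^N := by rw [hC0, ← hjk', pow_add]; ring
      calc (∑ jk ∈ Finset.HasAntidiagonal.antidiagonal N,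
            |(a jk.1 t * y.1 ^ jk.1) * (b jk.2 t * y.2 ^ jk.2)|)
          ≤ ∑ _jk ∈ Finset.HasAntidiagonal.antidiagonal N, C0 * θ^N := Finset.sum_le_sum hterm
        _ = (C0 * ((N:ℝ)+1)) * θ^N := by
            rw [Finset.sum_const, Finset.Nat.card_antidiagonal, nsmul_eq_mul]
            push_cast; ring
    have hFsummable : Summable (fun N => ∫ t, ‖F N t‖ ∂μ₀) := by
      have hs : Summable (fun N : ℕ => ((N:ℝ)+1) * θ^N) := by
        have h1 := summable_pow_mul_geometric_of_norm_lt_one 1 (r := θ)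
          (by rw [Real.norm_eq_abs, abs_of_nonneg hθ0]; exact hθ1)
        have h2 := summable_geometric_of_lt_one hθ0 hθ1
        exact (h1.add h2).congr (fun N => by push_cast; ring)
      have hs' : Summable (fun N : ℕ => C0 * (π/2) * (((N:ℝ)+1) * θ^N)) := hs.mul_left _
      refine Summable.of_nonneg_of_le (fun N => integral_nonneg (fun t => norm_nonneg _))
        (fun N => ?_) hs' 
      calc ∫ t, ‖F N t‖ ∂μ₀ ≤ ∫ _t, (C0 * ((N:ℝ)+1)) * θ^N ∂μ₀ :=
            integral_mono (hFint N).norm (integrable_const _)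
              (fun t => by rw [Real.norm_eq_abs]; exact hFbd N t)
        _ = C0 * (π/2) * (((N:ℝ)+1) * θ^N) := by
            rw [integral_const, smul_eq_mul, measureReal_def, hμuniv]; ring
    have hkey := MeasureTheory.hasSum_integral_of_summable_integral_norm
      (F := F) (μ := μ₀) hFint hFsummable
    have hqapp : ∀ N : ℕ, (q N) (fun _ => y) = ∫ t, F N t ∂μ₀ := by
      intro N
      rw [hqdef]
      rw [ContinuousMultilinearMap.sum_apply]
      rw [hF, integral_finset_sum _ (fun jk _ => hint2 jk.1 jk.2 (y.1 ^ jk.1) (y.2 ^ jk.2))]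
      refine Finset.sum_congr rfl (fun jk hjk => ?_)
      have hjk' : jk.1 + jk.2 = N := Finset.HasAntidiagonal.mem_antidiagonal.mp hjk
      rw [ContinuousMultilinearMap.smul_apply, hM_apply N jk.1 (by omega) y]
      have hre : (fun t => (a jk.1 t * y.1 ^ jk.1) * (b jk.2 t * y.2 ^ jk.2))
          = fun t => (a jk.1 t * b jk.2 t) * (y.1 ^ jk.1 * y.2 ^ jk.2) :=
        funext fun t => by ring
      rw [hre, MeasureTheory.integral_mul_const]
      have hNj : N - jk.1 = jk.2 := by omega
      rw [smul_eq_mul, hNj, hcdef]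
    have htsum : ∀ t : ℝ, (∑' N, F N t)
        = 1 / ((1 - (n₀ + y.1) * Real.sin t ^ 2) * Real.sqrt (1 - (m₀ + y.2) * Real.sin t ^ 2)) := by
      intro t
      have hu0 : (0:ℝ) ≤ Real.sin t ^ 2 := sq_nonneg _
      have hu1 : Real.sin t ^ 2 ≤ 1 := Real.sin_sq_le_one t
      have Ha : HasSum (fun j => a j t * y.1 ^ j) (1 / (1 - (n₀ + y.1) * Real.sin t ^ 2)) :=
        aHasSum hε hu0 hu1 (hAt t) hy1
      have Hb : HasSum (fun k => b k t * y.2 ^ k)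
          (1 / Real.sqrt (1 - (m₀ + y.2) * Real.sin t ^ 2)) :=
        bHasSum hε hu0 hu1 (hBt t) hy2
      have hsa : Summable (fun j => ‖a j t * y.1 ^ j‖) := by
        refine Summable.of_nonneg_of_le (fun _ => norm_nonneg _) (fun j => ?_)
          ((summable_geometric_of_lt_one hθ0 hθ1).mul_left ((2*ε)⁻¹))
        rw [Real.norm_eq_abs, abs_mul, abs_pow]
        calc |a j t| * |y.1|^j ≤ ((2*ε)⁻¹ * ((2*ε)⁻¹)^j) * ‖y‖^j :=
              mul_le_mul (ha_bd j t) (pow_le_pow_left₀ (abs_nonneg _) hy1n _)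
                (by positivity) (by positivity)
          _ = (2*ε)⁻¹ * θ^j := by rw [hθdef, div_pow, inv_pow]; ring
      have hsb : Summable (fun k => ‖b k t * y.2 ^ k‖) := by
        refine Summable.of_nonneg_of_le (fun _ => norm_nonneg _) (fun k => ?_)
          ((summable_geometric_of_lt_one hθ0 hθ1).mul_left ((2*ε) ^ (-(1/2):ℝ)))
        rw [Real.norm_eq_abs, abs_mul, abs_pow]
        calc |b k t| * |y.2|^k ≤ ((2*ε) ^ (-(1/2):ℝ) * ((2*ε)⁻¹)^k) * ‖y‖^k :=
              mul_le_mul (hb_bd k t) (pow_le_pow_left₀ (abs_nonneg _) hy2n _)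
                (by positivity) (by positivity)
          _ = (2*ε) ^ (-(1/2):ℝ) * θ^k := by rw [hθdef, div_pow, inv_pow]; ring
      have hcauchy := tsum_mul_tsum_eq_tsum_sum_antidiagonal_of_summable_norm hsa hsb
      rw [hF]
      rw [← hcauchy, Ha.tsum_eq, Hb.tsum_eq, div_mul_div_comm, one_mul]
    have hfinal : (∫ t, (∑' N, F N t) ∂μ₀) = ellPi ((n₀, m₀) + y).1 ((n₀, m₀) + y).2 := by
      rw [Prod.fst_add, Prod.snd_add]
      have hpi : (0:ℝ) ≤ π/2 := by positivity
      rw [show ellPi ((n₀, m₀).1 + y.1) ((n₀, m₀).2 + y.2)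
          = ∫ t, (1 / ((1 - (n₀ + y.1) * Real.sin t ^ 2)
            * Real.sqrt (1 - (m₀ + y.2) * Real.sin t ^ 2))) ∂μ₀ from by
        simp only [ellPi]
        rw [intervalIntegral.integral_of_le hpi]]
      exact integral_congr_ae (ae_of_all _ htsum)
    rw [← hfinal]
    simp_rw [hqapp]
    exact hkey
  exact ⟨q, ⟨_, hball⟩⟩
end AuxEllPi

/-- `Φ₁` and `Φ₂` are real-analytic on the open set `{(a,b) : a > b, ab > 1}`. -/
theorem stmt_18 :
    AnalyticOnNhd ℝ (fun p : ℝ × ℝ => Phi1 p.1 p.2)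
      {p : ℝ × ℝ | p.1 > p.2 ∧ p.1 * p.2 > 1} ∧
    AnalyticOnNhd ℝ (fun p : ℝ × ℝ => Phi2 p.1 p.2)
      {p : ℝ × ℝ | p.1 > p.2 ∧ p.1 * p.2 > 1} := by
  have hmain : ∀ p₀ : ℝ × ℝ, p₀.1 > p₀.2 → p₀.1 * p₀.2 > 1 →
      AnalyticAt ℝ (fun p : ℝ × ℝ => Phi1 p.1 p.2) p₀ ∧
      AnalyticAt ℝ (fun p : ℝ × ℝ => Phi2 p.1 p.2) p₀ := by
    rintro ⟨a, b⟩ hab' h1'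
    have hab : a > b := hab'
    have h1 : a * b > 1 := h1'
    rcases lt_trichotomy a 0 with ha | ha | ha
    · have hev : ∀ᶠ p : ℝ × ℝ in nhds ((a, b) : ℝ × ℝ), p.1 < 0 :=
        (isOpen_lt continuous_fst continuous_const).mem_nhds (show a < (0:ℝ) from ha)
      constructor <;>
      · refine (analyticAt_const (v := (0:ℝ))).congr ?_
        filter_upwards [hev] with p hp
        have hsz : Real.sqrt p.1 = 0 := Real.sqrt_eq_zero'.mpr hp.le
        simp [Phi1, Phi2, hsz]
    · exfalso
      rw [ha] at h1
      norm_num at h1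
    · -- a > 0
      have hb : 0 < b := by nlinarith
      have hd : 0 < a - b := by linarith
      have h4pos : (0:ℝ) < 4 + (a - b)^2 := by positivity
      have hs := Real.sq_sqrt h4pos.le
      have hsnn := Real.sqrt_nonneg (4 + (a - b)^2)
      have hsgt : a - b < Real.sqrt (4 + (a - b)^2) := by nlinarith
      have hslt : Real.sqrt (4 + (a - b)^2) < a + b := by nlinarith
      have hmuArgPos : 0 < (a + b + Real.sqrt (4 + (a - b)^2)) / 2 := by nlinarith
      have hnuArgPos : 0 < (a + b - Real.sqrt (4 + (a - b)^2)) / 2 := by nlinarith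
      have hmu2 : muC a b ^ 2 = (a + b + Real.sqrt (4 + (a - b)^2)) / 2 :=
        Real.sq_sqrt hmuArgPos.le
      have hnu2 : nuC a b ^ 2 = (a + b - Real.sqrt (4 + (a - b)^2)) / 2 :=
        Real.sq_sqrt hnuArgPos.le
      have hamu : a - muC a b ^ 2 < 0 := by rw [hmu2]; nlinarith
      have hanu : a - b < a - nuC a b ^ 2 := by rw [hnu2]; nlinarith
      have hanupos : 0 < a - nuC a b ^ 2 := lt_trans hd hanu
      -- analytic building blocks
      have hfst : AnalyticAt ℝ (fun p : ℝ × ℝ => p.1) (a, b) := analyticAt_fst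
      have hsnd : AnalyticAt ℝ (fun p : ℝ × ℝ => p.2) (a, b) := analyticAt_snd
      have hsqa : AnalyticAt ℝ (fun p : ℝ × ℝ => Real.sqrt p.1) (a, b) :=
        (analyticAt_sqrt ha).comp hfst
      have hQ : AnalyticAt ℝ (fun p : ℝ × ℝ => 4 + (p.1 - p.2)^2) (a, b) :=
        analyticAt_const.add ((hfst.sub hsnd).pow 2)
      have hsqQ : AnalyticAt ℝ (fun p : ℝ × ℝ => Real.sqrt (4 + (p.1 - p.2)^2)) (a, b) :=
        AnalyticAt.comp (g := Real.sqrt) (f := fun p : ℝ × ℝ => 4 + (p.1 - p.2)^2)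
          (x := ((a,b) : ℝ × ℝ)) (analyticAt_sqrt h4pos) hQ
      have hmuArg : AnalyticAt ℝ
          (fun p : ℝ × ℝ => (p.1 + p.2 + Real.sqrt (4 + (p.1 - p.2)^2)) / 2) (a, b) :=
        ((hfst.add hsnd).add hsqQ).div analyticAt_const (by norm_num)
      have hnuArg : AnalyticAt ℝ
          (fun p : ℝ × ℝ => (p.1 + p.2 - Real.sqrt (4 + (p.1 - p.2)^2)) / 2) (a, b) :=
        ((hfst.add hsnd).sub hsqQ).div analyticAt_const (by norm_num)
      have hmu : AnalyticAt ℝ (fun p : ℝ × ℝ => muC p.1 p.2) (a, b) :=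
        AnalyticAt.comp (g := Real.sqrt)
          (f := fun p : ℝ × ℝ => (p.1 + p.2 + Real.sqrt (4 + (p.1 - p.2)^2)) / 2)
          (x := ((a,b) : ℝ × ℝ)) (analyticAt_sqrt hmuArgPos) hmuArg
      have hnu : AnalyticAt ℝ (fun p : ℝ × ℝ => nuC p.1 p.2) (a, b) :=
        AnalyticAt.comp (g := Real.sqrt)
          (f := fun p : ℝ × ℝ => (p.1 + p.2 - Real.sqrt (4 + (p.1 - p.2)^2)) / 2)
          (x := ((a,b) : ℝ × ℝ)) (analyticAt_sqrt hnuArgPos) hnuArg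
      have hdmu : AnalyticAt ℝ (fun p : ℝ × ℝ => p.1 - muC p.1 p.2 ^ 2) (a, b) :=
        hfst.sub (hmu.pow 2)
      have hdnu : AnalyticAt ℝ (fun p : ℝ × ℝ => p.1 - nuC p.1 p.2 ^ 2) (a, b) :=
        hfst.sub (hnu.pow 2)
      have hn1 : (a - b) / (a - muC a b ^ 2) < 1 :=
        lt_of_lt_of_le (div_neg_of_pos_of_neg hd hamu) (by norm_num)
      have hn2 : (a - b) / (a - nuC a b ^ 2) < 1 := by
        rw [div_lt_one hanupos]; exact hanu
      have hmlt : (a - b) / a < 1 := by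
        rw [div_lt_one ha]; linarith
      have hinner1 : AnalyticAt ℝ (fun p : ℝ × ℝ =>
          (((p.1 - p.2) / (p.1 - muC p.1 p.2 ^ 2), (p.1 - p.2) / p.1) : ℝ × ℝ)) (a, b) :=
        ((hfst.sub hsnd).div hdmu hamu.ne).prod ((hfst.sub hsnd).div hfst ha.ne')
      have hinner2 : AnalyticAt ℝ (fun p : ℝ × ℝ =>
          (((p.1 - p.2) / (p.1 - nuC p.1 p.2 ^ 2), (p.1 - p.2) / p.1) : ℝ × ℝ)) (a, b) :=
        ((hfst.sub hsnd).div hdnu hanupos.ne').prod ((hfst.sub hsnd).div hfst ha.ne')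
      have hcomp1 : AnalyticAt ℝ (fun p : ℝ × ℝ =>
          ellPi ((p.1 - p.2) / (p.1 - muC p.1 p.2 ^ 2)) ((p.1 - p.2) / p.1)) (a, b) :=
        AnalyticAt.comp (g := fun q : ℝ × ℝ => ellPi q.1 q.2)
          (f := fun p : ℝ × ℝ => (((p.1 - p.2) / (p.1 - muC p.1 p.2 ^ 2), (p.1 - p.2) / p.1) : ℝ × ℝ))
          (x := ((a,b) : ℝ × ℝ)) (ellPi_analyticAt hn1 hmlt) hinner1
      have hcomp2 : AnalyticAt ℝ (fun p : ℝ × ℝ =>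
          ellPi ((p.1 - p.2) / (p.1 - nuC p.1 p.2 ^ 2)) ((p.1 - p.2) / p.1)) (a, b) :=
        AnalyticAt.comp (g := fun q : ℝ × ℝ => ellPi q.1 q.2)
          (f := fun p : ℝ × ℝ => (((p.1 - p.2) / (p.1 - nuC p.1 p.2 ^ 2), (p.1 - p.2) / p.1) : ℝ × ℝ))
          (x := ((a,b) : ℝ × ℝ)) (ellPi_analyticAt hn2 hmlt) hinner2
      have hden1 : AnalyticAt ℝ (fun p : ℝ × ℝ =>
          π * Real.sqrt p.1 * (p.1 - muC p.1 p.2 ^ 2)) (a, b) :=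
        (analyticAt_const.mul hsqa).mul hdmu
      have hden2 : AnalyticAt ℝ (fun p : ℝ × ℝ =>
          π * Real.sqrt p.1 * (p.1 - nuC p.1 p.2 ^ 2)) (a, b) :=
        (analyticAt_const.mul hsqa).mul hdnu
      have hsqapos : 0 < Real.sqrt a := Real.sqrt_pos.mpr ha
      have hne1 : π * Real.sqrt a * (a - muC a b ^ 2) ≠ 0 :=
        mul_ne_zero (mul_ne_zero Real.pi_ne_zero hsqapos.ne') hamu.ne
      have hne2 : π * Real.sqrt a * (a - nuC a b ^ 2) ≠ 0 :=
        mul_ne_zero (mul_ne_zero Real.pi_ne_zero hsqapos.ne') hanupos.ne'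
      constructor
      · exact (hmu.mul hcomp1).div hden1 hne1
      · exact (hnu.mul hcomp2).div hden2 hne2
  exact ⟨fun p hp => (hmain p hp.1 hp.2).1, fun p hp => (hmain p hp.1 hp.2).2⟩
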